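/- Let S be a finite connected multigraph with edge costs c : E(S) → {0, 1, 2}, and let L ⊆ V(S) be such that S − L is connected and nonempty and every vertex of L has a neighbor outside L. Among all spanning trees T of S with L ⊆ leaves(T), one maximizing the total cost Σ_{e ∉ E(T)} c(e) of non-tree edges can be obtained by taking a minimum-cost spanning tree T' of S − L (with respect to c) and attaching each vertex u ∈ L to T' by an edge of minimum cost among the edges joining u to V(S) \ L. -/

import Mathlib

open SimpleGraph Set

namespace MTAO
variable {V : Type*}

lemma lift_walk {G : SimpleGraph V} {s : Set V} {a b : V} (p : G.Walk a b)
    (hp : ∀ x ∈ p.support, x ∈ s) :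
    ∃ (ha : a ∈ s) (hb : b ∈ s) (q : (G.induce s).Walk ⟨a, ha⟩ ⟨b, hb⟩),
      q.map (SimpleGraph.Embedding.induce s).toHom = p := by
  induction p with
  | nil => exact ⟨hp _ (by simp), hp _ (by simp), .nil, by simp⟩
  | @cons a a' b h p ih =>
    obtain ⟨ha', hb', q, hq⟩ := ih (fun x hx => hp x (by simp [hx]))
    exact ⟨hp _ (Walk.start_mem_support _), hb', .cons (by exact h) q, by subst hq; rfl⟩

lemma reachable_induce {G : SimpleGraph V} {s : Set V} {a b : V} (p : G.Walk a b)
    (hp : ∀ x ∈ p.support, x ∈ s) (ha : a ∈ s) (hb : b ∈ s) :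
    (G.induce s).Reachable ⟨a, ha⟩ ⟨b, hb⟩ := by
  obtain ⟨ha', hb', q, _⟩ := lift_walk p hp
  exact ⟨q⟩

lemma no_cycle_of_induce_acyclic {G : SimpleGraph V} {s : Set V}
    (hs : (G.induce s).IsAcyclic) {u : V}
    (p : G.Walk u u) (hc : p.IsCycle) (hsup : ∀ x ∈ p.support, x ∈ s) : False := by
  obtain ⟨ha, hb, q, hq⟩ := lift_walk p hsup
  refine hs q ?_
  rw [← Walk.map_isCycle_iff_of_injective (p := q)
    (f := (SimpleGraph.Embedding.induce s).toHom) Subtype.val_injective, hq]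
  exact hc

lemma support_not_mem_aux {G : SimpleGraph V} {L : Set V}
    (hG : ∀ a b, G.Adj a b → a ∉ L ∧ b ∉ L) {a b : V} (p : G.Walk a b) :
    ∀ x ∈ p.support, x ∉ L ∨ p.Nil := by
  induction p with
  | nil => intro x hx; exact Or.inr (by simp)
  | @cons a a' b h q ih =>
    intro x hx
    rw [Walk.support_cons, List.mem_cons] at hx
    refine Or.inl ?_
    rcases hx with rfl | hx
    · exact (hG _ _ h).1
    · rcases ih x hx with h1 | h1
      · exact h1
      · have hab : a' = b := h1.eq
        subst hab
        rw [h1.eq_nil] at hx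
        simp only [Walk.support_nil, List.mem_singleton] at hx
        subst hx; exact (hG _ _ h).2

lemma support_not_mem {G : SimpleGraph V} {L : Set V}
    (hG : ∀ a b, G.Adj a b → a ∉ L ∧ b ∉ L) {a b : V} (p : G.Walk a b)
    (hnil : ¬ p.Nil) : ∀ x ∈ p.support, x ∉ L := by
  intro x hx
  rcases support_not_mem_aux hG p x hx with h | h
  · exact h
  · exact absurd h hnil

end MTAO

open MTAO


/-- `T` is a spanning tree of `G`: a subgraph on all vertices that is a tree. -/
def IsSpanningTreeOf {V : Type*} (T G : SimpleGraph V) : Prop := T ≤ G ∧ T.IsTree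

/-- The set of leaves (vertices of degree 1) of a graph. -/
def leafSet {V : Type*} (T : SimpleGraph V) : Set V := {v | (T.neighborSet v).ncard = 1}

/-- Let `S` be a finite connected graph with edge costs `c` taking values in `{0, 1, 2}`,
and let `L` be a set of vertices such that `S − L` is connected (and nonempty) and every
vertex of `L` has a neighbour outside `L`.  Take a minimum-cost spanning tree `T'` of
`S − L` and attach every vertex `u ∈ L` to it by an edge `u – g u` of minimum cost among
the edges joining `u` to `V(S) \ L`.  Then the resulting graph `T` is a spanning tree of
`S` with `L ⊆ leaves(T)` that, among all such spanning trees, maximizes the total cost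
`Σ_{e ∉ E(T)} c(e)` of non-tree edges. -/
theorem min_tree_attach_optimal {V : Type*} [Fintype V] (S : SimpleGraph V)
    (hS : S.Connected) (c : Sym2 V → ℕ) (hc : ∀ e, c e ≤ 2) (L : Set V)
    (hLconn : (S.induce Lᶜ).Connected)
    (hdom : ∀ u ∈ L, ∃ w ∉ L, S.Adj u w)
    (T' : SimpleGraph V) (hT'S : T' ≤ S)
    (hT'supp : ∀ a b, T'.Adj a b → a ∉ L ∧ b ∉ L)
    (hT'tree : (T'.induce Lᶜ).IsTree)
    (hT'min : ∀ F : SimpleGraph V, F ≤ S → (∀ a b, F.Adj a b → a ∉ L ∧ b ∉ L) →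
      (F.induce Lᶜ).IsTree →
      (∑ᶠ e ∈ T'.edgeSet, c e) ≤ (∑ᶠ e ∈ F.edgeSet, c e))
    (g : V → V)
    (hg : ∀ u ∈ L, g u ∉ L ∧ S.Adj u (g u) ∧
      ∀ w ∉ L, S.Adj u w → c s(u, g u) ≤ c s(u, w))
    (T : SimpleGraph V)
    (hTdef : T = T' ⊔ SimpleGraph.fromRel (fun a b => a ∈ L ∧ b = g a)) :
    IsSpanningTreeOf T S ∧ (∀ u ∈ L, u ∈ leafSet T) ∧
    ∀ T₂ : SimpleGraph V, IsSpanningTreeOf T₂ S → (∀ u ∈ L, u ∈ leafSet T₂) →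
      (∑ᶠ e ∈ (S.edgeSet \ T₂.edgeSet), c e) ≤ (∑ᶠ e ∈ (S.edgeSet \ T.edgeSet), c e) := by
  classical
  -- basic adjacency facts about T
  have hTadj : ∀ a b, T.Adj a b ↔
      T'.Adj a b ∨ (a ≠ b ∧ ((a ∈ L ∧ b = g a) ∨ (b ∈ L ∧ a = g b))) := by
    subst hTdef; intro a b; simp [SimpleGraph.fromRel_adj]
  have hTadjL : ∀ u ∈ L, ∀ x, T.Adj u x ↔ x = g u := by
    intro u hu x
    rw [hTadj]
    constructor
    · rintro (h | ⟨hne, ⟨-, rfl⟩ | ⟨hxL, rfl⟩⟩)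
      · exact absurd hu (hT'supp _ _ h).1
      · rfl
      · exact absurd hu (hg x hxL).1
    · rintro rfl
      exact Or.inr ⟨fun h => (hg u hu).1 (h ▸ hu), Or.inl ⟨hu, rfl⟩⟩
  have hnbr : ∀ u ∈ L, T.neighborSet u = {g u} := by
    intro u hu; ext x; simp [SimpleGraph.mem_neighborSet, hTadjL u hu]
  have hT'T : T' ≤ T := hTdef ▸ le_sup_left
  have hTS : T ≤ S := by
    subst hTdef
    refine sup_le hT'S ?_
    intro a b hab
    rw [SimpleGraph.fromRel_adj] at hab
    rcases hab with ⟨hne, ⟨h1, rfl⟩ | ⟨h1, rfl⟩⟩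
    · exact (hg a h1).2.1
    · exact (hg b h1).2.1.symm
  -- connectivity of T
  have hreach1 : ∀ x, ∃ y, y ∉ L ∧ T.Reachable x y := by
    intro x
    by_cases hx : x ∈ L
    · exact ⟨g x, (hg x hx).1, ((hTadjL x hx (g x)).mpr rfl).reachable⟩
    · exact ⟨x, hx, .refl x⟩
  have hreach2 : ∀ y z, y ∉ L → z ∉ L → T.Reachable y z := by
    intro y z hy hz
    have := hT'tree.isConnected.preconnected ⟨y, hy⟩ ⟨z, hz⟩
    have := this.map (SimpleGraph.Embedding.induce Lᶜ).toHom
    exact this.mono hT'T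
  have hTconn : T.Connected := by
    have hne : Nonempty V := hS.nonempty
    refine ⟨fun x y => ?_⟩
    obtain ⟨x', hx', hxr⟩ := hreach1 x
    obtain ⟨y', hy', hyr⟩ := hreach1 y
    exact hxr.trans ((hreach2 x' y' hx' hy').trans hyr.symm)
  -- acyclicity of T'
  have hT'acyc : T'.IsAcyclic := by
    intro u p hcy
    exact no_cycle_of_induce_acyclic hT'tree.IsAcyclic p hcy
      (support_not_mem hT'supp p hcy.not_nil)
  -- acyclicity of T
  have hTacyc : T.IsAcyclic := by
    intro u p hcy
    have hsup : ∀ x ∈ p.support, x ∉ L := by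
      intro x hxs hxL
      have hc' := hcy.rotate hxs
      set c' := p.rotate x hxs with hc'def
      revert hc'
      cases hc : c' with
      | nil => exact fun hcc => Walk.IsCycle.not_of_nil hcc
      | @cons _ v _ h q =>
        intro hcc
        have hv : v = g x := (hTadjL x hxL v).mp h
        have hql : ¬ q.Nil := by
          rw [Walk.nil_iff_length_eq]
          have h3 := hcc.three_le_length
          rw [Walk.length_cons] at h3
          omega
        have hqr : ¬ q.reverse.Nil := by
          rw [Walk.nil_iff_length_eq, Walk.length_reverse]
          rw [Walk.nil_iff_length_eq] at hql
          exact hql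
        obtain ⟨w, h2, q2, hq2⟩ := Walk.not_nil_iff.mp hqr
        have hw : w = g x := (hTadjL x hxL w).mp h2
        subst hv; subst hw
        have hmem : s(x, g x) ∈ q.edges := by
          have : s(x, g x) ∈ q.reverse.edges := by rw [hq2]; simp
          rwa [Walk.edges_reverse, List.mem_reverse] at this
        rw [Walk.cons_isCycle_iff] at hcc
        exact hcc.2 hmem
    have hedges : ∀ e ∈ p.edges, e ∈ T'.edgeSet := by
      intro e he
      revert he
      refine Sym2.ind (fun a b he => ?_) e
      have ha := hsup a (Walk.fst_mem_support_of_mem_edges p he)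
      have hb := hsup b (Walk.snd_mem_support_of_mem_edges p he)
      have hab : T.Adj a b := p.edges_subset_edgeSet he
      rw [hTadj] at hab
      rcases hab with h | ⟨_, ⟨h1, _⟩ | ⟨h1, _⟩⟩
      · exact h
      · exact absurd h1 ha
      · exact absurd h1 hb
    exact hT'acyc _ (hcy.transfer hedges)
  have hTtree : T.IsTree := ⟨hTconn, hTacyc⟩
  have hLeafT : ∀ u ∈ L, u ∈ leafSet T := by
    intro u hu
    show (T.neighborSet u).ncard = 1
    rw [hnbr u hu]; exact Set.ncard_singleton _
  refine ⟨⟨hTS, hTtree⟩, hLeafT, ?_⟩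
  intro T₂ hT₂ hleaf
  -- the unique-neighbour function for leaves of T₂
  have hex : ∀ u : V, ∃ w, u ∈ L → T₂.neighborSet u = {w} := by
    intro u
    by_cases hu : u ∈ L
    · obtain ⟨w, hw⟩ := Set.ncard_eq_one.mp (hleaf u hu)
      exact ⟨w, fun _ => hw⟩
    · exact ⟨u, fun h => absurd h hu⟩
  choose f hf using hex
  have hfadj : ∀ u ∈ L, T₂.Adj u (f u) := by
    intro u hu
    have : f u ∈ T₂.neighborSet u := by rw [hf u hu]; rfl
    exact this
  have huniq : ∀ u ∈ L, ∀ x, T₂.Adj u x → x = f u := by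
    intro u hu x hx
    have : x ∈ T₂.neighborSet u := hx
    rwa [hf u hu, Set.mem_singleton_iff] at this
  obtain ⟨⟨x0, hx0⟩⟩ := hLconn.nonempty
  have hx0L : x0 ∉ L := hx0
  have hfL : ∀ u ∈ L, f u ∉ L := by
    intro u hu hfu
    have hffu : f (f u) = u := (huniq (f u) hfu u (hfadj u hu).symm).symm
    obtain ⟨p0⟩ := hT₂.2.isConnected.preconnected u x0
    have hPnil : ¬ (p0.toPath : T₂.Walk u x0).Nil :=
      Walk.not_nil_of_ne (fun h => hx0L (h ▸ hu))
    obtain ⟨v, h1, q, hq⟩ := Walk.not_nil_iff.mp hPnil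
    have hv : v = f u := huniq u hu v h1
    subst hv
    have hqnil : ¬ q.Nil := Walk.not_nil_of_ne (fun h => hx0L (h ▸ hfu))
    obtain ⟨w, h2, q2, hq2⟩ := Walk.not_nil_iff.mp hqnil
    have hw : w = u := by have := huniq (f u) hfu w h2; rw [this, hffu]
    have hnd := p0.toPath.prop.support_nodup
    rw [hq, Walk.support_cons] at hnd
    have humem : u ∈ q.support := by
      rw [hq2, Walk.support_cons]
      exact List.mem_cons_of_mem _ (hw ▸ q2.start_mem_support)
    exact (List.nodup_cons.mp hnd).1 humem
  -- the restriction of T₂ to the complement of L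
  let F : SimpleGraph V :=
    { Adj := fun a b => T₂.Adj a b ∧ a ∉ L ∧ b ∉ L
      symm := ⟨fun a b h => ⟨h.1.symm, h.2.2, h.2.1⟩⟩
      loopless := ⟨fun a h => T₂.loopless.irrefl a h.1⟩ }
  have hFT₂ : F ≤ T₂ := fun a b h => h.1
  have hFS : F ≤ S := le_trans hFT₂ hT₂.1
  have hFsupp : ∀ a b, F.Adj a b → a ∉ L ∧ b ∉ L := fun a b h => h.2
  have hFacyc : (F.induce Lᶜ).IsAcyclic := by
    intro u p hcy
    have h1 : ((p.map (SimpleGraph.Embedding.induce Lᶜ).toHom)).IsCycle :=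
      hcy.map Subtype.val_injective
    exact hT₂.2.IsAcyclic _ (h1.mapLe hFT₂)
  have hFconn : (F.induce Lᶜ).Connected := by
    have hne : Nonempty ↥Lᶜ := hLconn.nonempty
    refine ⟨?_⟩
    rintro ⟨a, ha⟩ ⟨b, hb⟩
    obtain ⟨p0⟩ := hT₂.2.isConnected.preconnected a b
    set P := (p0.toPath : T₂.Walk a b) with hP
    have hsupP : ∀ x ∈ P.support, x ∈ Lᶜ := by
      intro x hxs
      by_contra hxc
      rw [Set.notMem_compl_iff] at hxc
      have hxa : x ≠ a := fun h => ha (h ▸ hxc)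
      have hxb : x ≠ b := fun h => hb (h ▸ hxc)
      have hspec : (P.takeUntil x hxs).append (P.dropUntil x hxs) = P :=
        Walk.take_spec P hxs
      have hnd : P.support.Nodup := p0.toPath.prop.support_nodup
      have hnds : ((P.takeUntil x hxs).support ++ (P.dropUntil x hxs).support.tail).Nodup := by
        rw [← Walk.support_append, hspec]; exact hnd
      have hp1nil : ¬ (P.takeUntil x hxs).Nil := Walk.not_nil_of_ne (Ne.symm hxa)
      have hp2nil : ¬ (P.dropUntil x hxs).Nil := Walk.not_nil_of_ne hxb
      have hp1r : ¬ (P.takeUntil x hxs).reverse.Nil := by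
        rw [Walk.nil_iff_length_eq, Walk.length_reverse]
        rw [Walk.nil_iff_length_eq] at hp1nil
        exact hp1nil
      obtain ⟨w, hw1, q1, hq1⟩ := Walk.not_nil_iff.mp hp1r
      have hwfx : w = f x := huniq x hxc w hw1
      have hwmem : w ∈ (P.takeUntil x hxs).support := by
        have : w ∈ (P.takeUntil x hxs).reverse.support := by
          rw [hq1, Walk.support_cons]
          exact List.mem_cons_of_mem _ q1.start_mem_support
        rwa [Walk.support_reverse, List.mem_reverse] at this
      obtain ⟨v2, hv2, q2, hq2⟩ := Walk.not_nil_iff.mp hp2nil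
      have hvfx : v2 = f x := huniq x hxc v2 hv2
      have hvmem : v2 ∈ (P.dropUntil x hxs).support.tail := by
        rw [hq2, Walk.support_cons, List.tail_cons]
        exact q2.start_mem_support
      exact (List.disjoint_of_nodup_append hnds) (hwfx ▸ hwmem) (hvfx ▸ hvmem)
    have hedges : ∀ e ∈ P.edges, e ∈ F.edgeSet := by
      intro e he
      revert he
      refine Sym2.ind (fun a' b' he => ?_) e
      rw [SimpleGraph.mem_edgeSet]
      exact ⟨P.edges_subset_edgeSet he, hsupP a' (Walk.fst_mem_support_of_mem_edges P he),
        hsupP b' (Walk.snd_mem_support_of_mem_edges P he)⟩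
    exact reachable_induce (P.transfer F hedges)
      (fun x hx => hsupP x (by rwa [Walk.support_transfer] at hx)) ha hb
  have h5 := hT'min F hFS hFsupp ⟨hFconn, hFacyc⟩
  -- edge set decompositions
  have hTe : T.edgeSet = T'.edgeSet ∪ (fun u => s(u, g u)) '' L := by
    ext e
    refine Sym2.ind (fun a b => ?_) e
    simp only [SimpleGraph.mem_edgeSet, Set.mem_union, Set.mem_image, hTadj]
    constructor
    · rintro (h | ⟨hne, ⟨h1, rfl⟩ | ⟨h1, rfl⟩⟩)
      · exact Or.inl h
      · exact Or.inr ⟨a, h1, rfl⟩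
      · exact Or.inr ⟨b, h1, Sym2.eq_swap⟩
    · rintro (h | ⟨u, hu, he⟩)
      · exact Or.inl h
      · rcases Sym2.eq_iff.mp he with ⟨ha, hb⟩ | ⟨ha, hb⟩
        · refine Or.inr ⟨?_, Or.inl ⟨ha ▸ hu, by rw [← hb, ha]⟩⟩
          rw [← ha, ← hb]
          exact fun hh => (hg u hu).1 (hh ▸ hu)
        · refine Or.inr ⟨?_, Or.inr ⟨ha ▸ hu, by rw [← hb, ← ha]⟩⟩
          rw [← ha, ← hb]
          exact fun hh => (hg u hu).1 (by rw [hh]; exact hu)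
  have hT₂e : T₂.edgeSet = F.edgeSet ∪ (fun u => s(u, f u)) '' L := by
    ext e
    refine Sym2.ind (fun a b => ?_) e
    simp only [SimpleGraph.mem_edgeSet, Set.mem_union, Set.mem_image]
    constructor
    · intro h
      by_cases haL : a ∈ L
      · exact Or.inr ⟨a, haL, by rw [huniq a haL b h]⟩
      · by_cases hbL : b ∈ L
        · exact Or.inr ⟨b, hbL, by rw [huniq b hbL a h.symm]; exact Sym2.eq_swap⟩
        · exact Or.inl ⟨h, haL, hbL⟩
    · rintro (h | ⟨u, hu, he⟩)
      · exact h.1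
      · rcases Sym2.eq_iff.mp he with ⟨ha, hb⟩ | ⟨ha, hb⟩
        · rw [← ha, ← hb]; exact hfadj u hu
        · rw [← ha, ← hb]; exact (hfadj u hu).symm
  have hdisj1 : Disjoint T'.edgeSet ((fun u => s(u, g u)) '' L) := by
    rw [Set.disjoint_left]
    rintro e he ⟨u, hu, rfl⟩
    exact (hT'supp u (g u) ((SimpleGraph.mem_edgeSet _).mp he)).1 hu
  have hdisj2 : Disjoint F.edgeSet ((fun u => s(u, f u)) '' L) := by
    rw [Set.disjoint_left]
    rintro e he ⟨u, hu, rfl⟩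
    exact ((SimpleGraph.mem_edgeSet _).mp he).2.1 hu
  have hinj1 : Set.InjOn (fun u => s(u, g u)) L := by
    intro u hu v hv he
    rcases Sym2.eq_iff.mp he with ⟨h1, h2⟩ | ⟨h1, h2⟩
    · exact h1
    · exact absurd (h1 ▸ hu) (hg v hv).1
  have hinj2 : Set.InjOn (fun u => s(u, f u)) L := by
    intro u hu v hv he
    rcases Sym2.eq_iff.mp he with ⟨h1, h2⟩ | ⟨h1, h2⟩
    · exact h1
    · exact absurd (h1 ▸ hu) (hfL v hv)
  have hsumT : (∑ᶠ e ∈ T.edgeSet, c e)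
      = (∑ᶠ e ∈ T'.edgeSet, c e) + ∑ᶠ u ∈ L, c s(u, g u) := by
    rw [hTe, finsum_mem_union hdisj1 (Set.toFinite _) (Set.toFinite _),
      finsum_mem_image hinj1]
  have hsumT₂ : (∑ᶠ e ∈ T₂.edgeSet, c e)
      = (∑ᶠ e ∈ F.edgeSet, c e) + ∑ᶠ u ∈ L, c s(u, f u) := by
    rw [hT₂e, finsum_mem_union hdisj2 (Set.toFinite _) (Set.toFinite _),
      finsum_mem_image hinj2]
  have hsumL : (∑ᶠ u ∈ L, c s(u, g u)) ≤ ∑ᶠ u ∈ L, c s(u, f u) := by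
    rw [finsum_mem_eq_finite_toFinset_sum _ (Set.toFinite L),
        finsum_mem_eq_finite_toFinset_sum _ (Set.toFinite L)]
    refine Finset.sum_le_sum ?_
    intro u hu
    rw [Set.Finite.mem_toFinset] at hu
    exact (hg u hu).2.2 (f u) (hfL u hu) (hT₂.1 (hfadj u hu))
  have key : ∀ (X : SimpleGraph V), X ≤ S →
      (∑ᶠ e ∈ (S.edgeSet \ X.edgeSet), c e) + (∑ᶠ e ∈ X.edgeSet, c e)
        = ∑ᶠ e ∈ S.edgeSet, c e := by
    intro X hX
    rw [← finsum_mem_union disjoint_sdiff_left (Set.toFinite _) (Set.toFinite _),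
      Set.diff_union_of_subset (SimpleGraph.edgeSet_mono hX)]
  have e1 := key T₂ hT₂.1
  have e2 := key T hTS
  have hTle : (∑ᶠ e ∈ T.edgeSet, c e) ≤ ∑ᶠ e ∈ T₂.edgeSet, c e := by
    rw [hsumT, hsumT₂]
    exact Nat.add_le_add h5 hsumL
  omega
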